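/- Let X ⊆ C([t0,θ];ℝ^n) be a set of functions, each satisfying the modulus-of-continuity bound ‖x(t1)-x(t2)‖ ≤ φ(|t1-t2|) with φ nondecreasing. Let Γ = {t0,...,tN=θ} be a uniform partition with mesh Δ, and let Z ⊆ C([t0,θ];ℝ^n) satisfy h_C(X, Z) ≤ η. Define F = {(t,x(t)) : t ∈ [t0,θ], x ∈ X} ⊆ ℝ^{n+1} and Φ = ∪_{i=0}^{N} {t_i} × Z(t_i). If Δ ≤ ε/10, φ(Δ) ≤ ε/10, and η ≤ 7ε/10, then the Hausdorff distance in ℝ^{n+1} satisfies h_{n+1}(F, Φ) ≤ ε. -/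
import Mathlib


theorem stmt_9 {n : ℕ} (t0 θ ε Δ η : ℝ) (ht : t0 < θ) (hε : 0 < ε)
    (N : ℕ) (hN : 0 < N) (hΔ : Δ = (θ - t0) / N)
    (φ : ℝ → ℝ) (hφmono : Monotone φ)
    (X Z : Set C(Set.Icc t0 θ, EuclideanSpace ℝ (Fin n)))
    (hXne : X.Nonempty) (hZne : Z.Nonempty)
    (hmod : ∀ x ∈ X, ∀ t1 t2 : Set.Icc t0 θ, ‖x t1 - x t2‖ ≤ φ |(t1 : ℝ) - (t2 : ℝ)|)
    (hfin : EMetric.hausdorffEdist X Z ≠ ⊤)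
    (hXZ : Metric.hausdorffDist X Z ≤ η)
    (node : ℕ → Set.Icc t0 θ)
    (hnode : ∀ i : ℕ, i ≤ N → ((node i : ℝ) = t0 + i * Δ))
    (F Φ : Set (ℝ × EuclideanSpace ℝ (Fin n)))
    (hF : F = {q | ∃ x ∈ X, ∃ t : Set.Icc t0 θ, q = ((t : ℝ), x t)})
    (hΦ : Φ = ⋃ i ∈ Finset.range (N + 1), {q | ∃ z ∈ Z, q = ((node i : ℝ), z (node i))})
    (h1 : Δ ≤ ε / 10) (h2 : φ Δ ≤ ε / 10) (h3 : η ≤ 7 * ε / 10) :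
    Metric.hausdorffDist F Φ ≤ ε := by
  have hNpos : (0:ℝ) < N := Nat.cast_pos.2 hN
  have hΔpos : 0 < Δ := by rw [hΔ]; exact div_pos (sub_pos.2 ht) hNpos
  have hNΔ : (N:ℝ) * Δ = θ - t0 := by
    rw [hΔ]; field_simp
  have hr : Metric.hausdorffDist X Z < 8 * ε / 10 := by
    calc Metric.hausdorffDist X Z ≤ η := hXZ
      _ ≤ 7 * ε / 10 := h3
      _ < 8 * ε / 10 := by linarith
  apply Metric.hausdorffDist_le_of_mem_dist hε.le
  · intro q hq
    rw [hF] at hq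
    obtain ⟨x, hx, t, rfl⟩ := hq
    set i := ⌊((t:ℝ) - t0) / Δ⌋₊ with hi
    have ht0 : (0:ℝ) ≤ (t:ℝ) - t0 := sub_nonneg.2 t.2.1
    have hdiv : ((t:ℝ) - t0) / Δ ≤ (N:ℝ) := by
      rw [div_le_iff₀ hΔpos, hNΔ]
      have := t.2.2; linarith
    have hiN : i ≤ N := by
      have := Nat.floor_mono hdiv
      simpa [hi] using this
    have hlow : (i:ℝ) * Δ ≤ (t:ℝ) - t0 := by
      have := Nat.floor_le (div_nonneg ht0 hΔpos.le)
      rw [← hi] at this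
      calc (i:ℝ) * Δ ≤ (((t:ℝ) - t0) / Δ) * Δ := by
            exact mul_le_mul_of_nonneg_right this hΔpos.le
        _ = (t:ℝ) - t0 := by field_simp
    have hhigh : (t:ℝ) - t0 < ((i:ℝ) + 1) * Δ := by
      have := Nat.lt_floor_add_one (((t:ℝ) - t0) / Δ)
      rw [← hi] at this
      calc (t:ℝ) - t0 = (((t:ℝ) - t0) / Δ) * Δ := by field_simp
        _ < ((i:ℝ) + 1) * Δ := by
            exact mul_lt_mul_of_pos_right (by push_cast at this ⊢; linarith) hΔpos
    have hnodei : ((node i : ℝ)) = t0 + i * Δ := hnode i hiN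
    have htnode : |(t:ℝ) - (node i : ℝ)| ≤ Δ := by
      rw [hnodei, abs_le]; constructor <;> nlinarith
    obtain ⟨z, hz, hdz⟩ := Metric.exists_dist_lt_of_hausdorffDist_lt hx hr hfin
    refine ⟨((node i : ℝ), z (node i)), ?_, ?_⟩
    · rw [hΦ]
      refine Set.mem_iUnion.2 ⟨i, Set.mem_iUnion.2 ⟨Finset.mem_range.2 (Nat.lt_succ_of_le hiN), ⟨z, hz, rfl⟩⟩⟩
    · rw [Prod.dist_eq]
      apply max_le
      · rw [Real.dist_eq]
        linarith [htnode]
      · have hb1 : dist (x t) (x (node i)) ≤ φ Δ := by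
          rw [dist_eq_norm]
          exact le_trans (hmod x hx t (node i)) (hφmono htnode)
        have hb2 : dist (x (node i)) (z (node i)) ≤ dist x z :=
          ContinuousMap.dist_apply_le_dist _
        calc dist (x t) (z (node i))
            ≤ dist (x t) (x (node i)) + dist (x (node i)) (z (node i)) := dist_triangle _ _ _
          _ ≤ φ Δ + dist x z := add_le_add hb1 hb2
          _ ≤ ε := by linarith
  · intro q hq
    rw [hΦ] at hq
    obtain ⟨i, hmem⟩ := Set.mem_iUnion.1 hq
    obtain ⟨hiN', z, hz, rfl⟩ := Set.mem_iUnion.1 hmem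
    have hr' : Metric.hausdorffDist Z X < 8 * ε / 10 := by
      rwa [Metric.hausdorffDist_comm]
    obtain ⟨x, hx, hdz⟩ := Metric.exists_dist_lt_of_hausdorffDist_lt hz hr'
      (by rwa [EMetric.hausdorffEdist_comm])
    refine ⟨((node i : ℝ), x (node i)), ?_, ?_⟩
    · rw [hF]; exact ⟨x, hx, node i, rfl⟩
    · rw [Prod.dist_eq]
      apply max_le
      · simp [Real.dist_eq]; linarith
      · have hb2 : dist (z (node i)) (x (node i)) ≤ dist z x :=
          ContinuousMap.dist_apply_le_dist _
        linarith
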